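/- arXiv:2009.07952 — 2 statements merged into one kernel-verified Lean document; each statement's English description precedes it below -/
import Mathlib

section
/- For every x₀ ∈ ℝ^N and every T > 0 there exists a unique solution of the N-dimensional shell model on [0,T] with initial condition x₀. -/
/-- Coefficients of the N-dimensional shell model: `k n = λ ^ n` for `1 < n < N`,
and `k 0 = k 1 = k N = k (N+1) = 0`. -/
noncomputable def shellK (lam : ℝ) (N : ℕ) (n : ℕ) : ℝ :=
  if 1 < n ∧ n < N then lam ^ n else 0

open Set Metric Finset

/-- Extend a vector `v : Fin N → ℝ` to `ℕ`, with `v` placed on indices `1..N` and `0` elsewhere. -/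
noncomputable def shellExt (N : ℕ) (v : Fin N → ℝ) (n : ℕ) : ℝ :=
  if h : 1 ≤ n ∧ n ≤ N then v ⟨n - 1, by omega⟩ else 0

/-- The shell-model vector field. Component `i` corresponds to shell `n = i + 1`. -/
noncomputable def shellF (lam : ℝ) (N : ℕ) (v : Fin N → ℝ) : Fin N → ℝ := fun i =>
  shellK lam N ((i : ℕ) + 1) * (shellExt N v (i : ℕ)) ^ 2
    - shellK lam N ((i : ℕ) + 1 + 1) * shellExt N v ((i : ℕ) + 1) * shellExt N v ((i : ℕ) + 1 + 1)
    - shellK lam N ((i : ℕ) + 1) * (shellExt N v ((i : ℕ) + 1 + 1)) ^ 2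
    + shellK lam N (i : ℕ) * shellExt N v (i : ℕ) * shellExt N v ((i : ℕ) + 1)

lemma shellExt_succ (N : ℕ) (v : Fin N → ℝ) (i : Fin N) :
    shellExt N v ((i : ℕ) + 1) = v i := by
  have h : 1 ≤ (i : ℕ) + 1 ∧ (i : ℕ) + 1 ≤ N := ⟨Nat.le_add_left _ _, i.isLt⟩
  simp only [shellExt, dif_pos h, Nat.add_sub_cancel, Fin.eta]

/-- Energy orthogonality: `⟨v, F v⟩ = 0`. -/
lemma shell_energy_zero (lam : ℝ) (N : ℕ) (v : Fin N → ℝ) :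
    ∑ i : Fin N, v i * shellF lam N v i = 0 := by
  set a : ℕ → ℝ := fun n =>
    shellK lam N n * shellExt N v n * (shellExt N v (n - 1)) ^ 2
      + shellK lam N (n - 1) * shellExt N v (n - 1) * (shellExt N v n) ^ 2 with ha
  have key : ∀ i : Fin N, v i * shellF lam N v i = a ((i : ℕ) + 1) - a ((i : ℕ) + 1 + 1) := by
    intro i
    have h1 : shellExt N v ((i : ℕ) + 1) = v i := shellExt_succ N v i
    simp only [ha, shellF, Nat.add_sub_cancel, h1]
    ring
  have h2 : ∑ i : Fin N, v i * shellF lam N v i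
      = ∑ j ∈ range N, (a (j + 1) - a (j + 1 + 1)) := by
    rw [Finset.sum_congr rfl fun i _ => key i]
    exact Fin.sum_univ_eq_sum_range (fun j => a (j + 1) - a (j + 1 + 1)) N
  rw [h2, Finset.sum_range_sub' (fun j => a (j + 1)) N]
  have e1 : a 1 = 0 := by
    simp [ha, shellK, shellExt]
  have e2 : a (N + 1) = 0 := by
    have k1 : shellK lam N (N + 1) = 0 := by simp [shellK]
    have k2 : shellK lam N N = 0 := by simp [shellK]
    simp [ha, Nat.add_sub_cancel, k1, k2]
  rw [e1, e2, sub_zero]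

lemma contDiff_shellExt (N : ℕ) (n : ℕ) :
    ContDiff ℝ 1 (fun v : Fin N → ℝ => shellExt N v n) := by
  by_cases h : 1 ≤ n ∧ n ≤ N
  · simp only [shellExt, dif_pos h]
    exact contDiff_apply ℝ ℝ _
  · simp only [shellExt, dif_neg h]
    exact contDiff_const

lemma contDiff_shellF (lam : ℝ) (N : ℕ) : ContDiff ℝ 1 (shellF lam N) := by
  rw [contDiff_pi]
  intro i
  exact (((contDiff_const.mul ((contDiff_shellExt N _).pow 2)).sub
    ((contDiff_const.mul (contDiff_shellExt N _)).mul (contDiff_shellExt N _))).sub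
    (contDiff_const.mul ((contDiff_shellExt N _).pow 2))).add
    ((contDiff_const.mul (contDiff_shellExt N _)).mul (contDiff_shellExt N _))

/-- A globally Lipschitz, bounded truncation of the shell vector field that agrees with it
on the energy ball of radius `r` and is everywhere orthogonal to the position vector. -/
lemma shell_truncated (lam : ℝ) (N : ℕ) (r : ℝ) (hr : 0 < r) :
    ∃ g : (Fin N → ℝ) → (Fin N → ℝ), (∃ K : NNReal, LipschitzWith K g) ∧
      (∃ C : ℝ, ∀ v, ‖g v‖ ≤ C) ∧
      (∀ v : Fin N → ℝ, (∑ i, (v i) ^ 2) ≤ r → g v = shellF lam N v) ∧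
      (∀ v : Fin N → ℝ, ∑ i : Fin N, v i * g v i = 0) := by
  set φ : ContDiffBump (0 : ℝ) := ⟨r, r + 1, hr, lt_add_one r⟩ with hφ
  set En : (Fin N → ℝ) → ℝ := fun v => ∑ i, (v i) ^ 2 with hEn
  have hEnCD : ContDiff ℝ 1 En := ContDiff.sum fun i _ => (contDiff_apply ℝ ℝ i).pow 2
  set g : (Fin N → ℝ) → (Fin N → ℝ) := fun v => φ (En v) • shellF lam N v with hg
  have hgCD : ContDiff ℝ 1 g := (φ.contDiff.comp hEnCD).smul (contDiff_shellF lam N)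
  have hEn_nonneg : ∀ v, 0 ≤ En v := fun v => Finset.sum_nonneg fun i _ => sq_nonneg _
  have hsupp : HasCompactSupport g := by
    apply HasCompactSupport.intro (isCompact_closedBall (0 : Fin N → ℝ) (Real.sqrt (r + 1)))
    intro v hv
    by_contra hv0
    apply hv
    have hφne : φ (En v) ≠ 0 := fun h => hv0 (by simp [hg, h])
    have h1 : En v < r + 1 := by
      have h2 := φ.support_eq ▸ Function.mem_support.2 hφne
      rw [mem_ball, Real.dist_eq, sub_zero, abs_of_nonneg (hEn_nonneg v)] at h2
      exact h2
    rw [mem_closedBall, dist_zero_right]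
    rw [pi_norm_le_iff_of_nonneg (Real.sqrt_nonneg _)]
    intro i
    have h3 : (v i) ^ 2 ≤ En v :=
      Finset.single_le_sum (fun j _ => sq_nonneg (v j)) (Finset.mem_univ i)
    rw [Real.norm_eq_abs, ← Real.sqrt_sq_eq_abs]
    exact Real.sqrt_le_sqrt (h3.trans h1.le)
  refine ⟨g, ?_, ?_, ?_, ?_⟩
  · obtain ⟨C, hC⟩ := (hsupp.fderiv ℝ).exists_bound_of_continuous
      (hgCD.continuous_fderiv one_ne_zero)
    exact ⟨C.toNNReal, lipschitzWith_of_nnnorm_fderiv_le (hgCD.differentiable one_ne_zero)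
      fun x => by rw [← norm_toNNReal]; exact Real.toNNReal_mono (hC x)⟩
  · obtain ⟨C, hC⟩ := hsupp.exists_bound_of_continuous hgCD.continuous
    exact ⟨C, hC⟩
  · intro v hv
    have h1 : En v ∈ closedBall (0 : ℝ) φ.rIn := by
      rw [mem_closedBall, Real.dist_eq, sub_zero, abs_of_nonneg (hEn_nonneg v)]
      exact hv
    rw [hg]
    simp only [φ.one_of_mem_closedBall h1, one_smul]
  · intro v
    simp only [hg, Pi.smul_apply, smul_eq_mul]
    have h1 : ∀ i : Fin N, v i * (φ (En v) * shellF lam N v i)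
        = φ (En v) * (v i * shellF lam N v i) := fun i => by ring
    rw [Finset.sum_congr rfl fun i _ => h1 i, ← Finset.mul_sum, shell_energy_zero, mul_zero]

/-- A solution of the `N`-dimensional shell model on `[0,T]`, with the convention
`X_0 ≡ 0`, `X_{N+1} ≡ 0`. -/
def IsShellSolution (lam : ℝ) (N : ℕ) (T : ℝ) (X : ℝ → ℕ → ℝ) : Prop :=
  (∀ t, X t 0 = 0) ∧ (∀ t, X t (N + 1) = 0) ∧
  ∀ n, 1 ≤ n → n ≤ N → ∀ t ∈ Set.Icc (0 : ℝ) T,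
    HasDerivWithinAt (fun u => X u n)
      (shellK lam N n * (X t (n - 1)) ^ 2
        - shellK lam N (n + 1) * X t n * X t (n + 1)
        - shellK lam N n * (X t (n + 1)) ^ 2
        + shellK lam N (n - 1) * X t (n - 1) * X t n)
      (Set.Icc (0 : ℝ) T) t

/-- for every initial condition `x₀ ∈ ℝ^N` and every `T > 0` there exists a
unique solution of the `N`-dimensional shell model on `[0,T]` with initial condition `x₀`. -/
theorem shell_existence_uniqueness (lam : ℝ) (hlam : 1 < lam) (N : ℕ) (hN : 1 ≤ N)
    (T : ℝ) (hT : 0 < T) (x₀ : ℕ → ℝ) :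
    (∃ X : ℝ → ℕ → ℝ, IsShellSolution lam N T X ∧ ∀ n, 1 ≤ n → n ≤ N → X 0 n = x₀ n) ∧
    (∀ X Y : ℝ → ℕ → ℝ, IsShellSolution lam N T X → IsShellSolution lam N T Y →
      (∀ n, 1 ≤ n → n ≤ N → X 0 n = x₀ n) → (∀ n, 1 ≤ n → n ≤ N → Y 0 n = x₀ n) →
      ∀ n, 1 ≤ n → n ≤ N → ∀ t ∈ Set.Icc (0 : ℝ) T, X t n = Y t n) := by
  constructor
  · -- Existence
    set x₀v : Fin N → ℝ := fun i => x₀ ((i : ℕ) + 1) with hx₀v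
    set r : ℝ := (∑ i, (x₀v i) ^ 2) + 1 with hr
    have hr0 : 0 < r :=
      lt_of_lt_of_le zero_lt_one
        (le_add_of_nonneg_left (Finset.sum_nonneg fun i _ => sq_nonneg _))
    obtain ⟨g, ⟨K, hK⟩, ⟨C, hC⟩, hagree, horth⟩ := shell_truncated lam N r hr0
    have hpl : IsPicardLindelof (fun _ x => g x) (tmin := 0) (tmax := T) ⟨0, ⟨le_rfl, hT.le⟩⟩ x₀v
        (C.toNNReal * T.toNNReal) 0 C.toNNReal K :=
      { lipschitzOnWith := fun _ _ => hK.lipschitzOnWith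
        continuousOn := fun _ _ => continuousOn_const
        norm_le := fun _ _ x _ => (hC x).trans (Real.le_coe_toNNReal C)
        mul_max_le := by simp [Real.coe_toNNReal _ hT.le, hT.le] }
    obtain ⟨sol, hsol0', hsol⟩ := hpl.exists_eq_forall_mem_Icc_hasDerivWithinAt₀
    have hsol0 : sol 0 = x₀v := hsol0'
    -- energy conservation
    have hsolc : ContinuousOn sol (Icc 0 T) := fun t ht => (hsol t ht).continuousWithinAt
    have hcontE : ContinuousOn (fun u => ∑ i, (sol u i) ^ 2) (Icc (0:ℝ) T) := by
      apply continuousOn_finset_sum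
      intro i _
      exact (continuousOn_pi.1 hsolc i).pow 2
    have hderivE : ∀ t ∈ Ico (0:ℝ) T,
        HasDerivWithinAt (fun u => ∑ i, (sol u i) ^ 2) 0 (Ici t) t := by
      intro t ht
      have h1 : HasDerivWithinAt sol (g (sol t)) (Ici t) t :=
        (hsol t (Ico_subset_Icc_self ht)).mono_of_mem_nhdsWithin (Icc_mem_nhdsGE_of_mem ht)
      have h2 := hasDerivWithinAt_pi.1 h1
      have h3 : HasDerivWithinAt (fun u => ∑ i, (sol u i) ^ 2)
          (∑ i : Fin N, 2 * sol t i * g (sol t) i) (Ici t) t := by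
        apply HasDerivWithinAt.fun_sum
        intro i _
        simpa using (h2 i).fun_pow 2
      have hz : (∑ i : Fin N, 2 * sol t i * g (sol t) i) = 0 := by
        have h4 : ∀ i : Fin N, 2 * sol t i * g (sol t) i
            = 2 * (sol t i * g (sol t) i) := fun i => by ring
        rw [Finset.sum_congr rfl fun i _ => h4 i, ← Finset.mul_sum, horth, mul_zero]
      exact hz ▸ h3
    have hEconst := constant_of_has_deriv_right_zero hcontE hderivE
    have hEle : ∀ t ∈ Icc (0:ℝ) T, (∑ i, (sol t i) ^ 2) ≤ r := by
      intro t ht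
      rw [hEconst t ht, hsol0, hr]
      linarith
    have hgF : ∀ t ∈ Icc (0:ℝ) T, g (sol t) = shellF lam N (sol t) :=
      fun t ht => hagree _ (hEle t ht)
    refine ⟨fun t n => shellExt N (sol t) n, ⟨?_, ?_, ?_⟩, ?_⟩
    · intro t; simp [shellExt]
    · intro t
      show shellExt N (sol t) (N + 1) = 0
      rw [shellExt, dif_neg (by omega : ¬(1 ≤ N + 1 ∧ N + 1 ≤ N))]
    · intro n h1 h2 t ht
      obtain ⟨m, rfl⟩ : ∃ m, n = m + 1 := ⟨n - 1, by omega⟩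
      have hm : m < N := by omega
      set i : Fin N := ⟨m, hm⟩ with hi
      have key := hasDerivWithinAt_pi.1 (hsol t ht) i
      rw [hgF t ht] at key
      have hfun : (fun u => shellExt N (sol u) (m + 1)) = fun u => sol u i :=
        funext fun u => shellExt_succ N (sol u) i
      rw [← hfun] at key
      simp only [Nat.add_sub_cancel]
      exact key
    · intro n h1 h2
      show shellExt N (sol 0) n = x₀ n
      rw [hsol0, shellExt, dif_pos ⟨h1, h2⟩]
      show x₀ (n - 1 + 1) = x₀ n
      congr 1
      omega
  · -- Uniqueness
    intro X Y hX hY hX0 hY0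
    set x : ℝ → Fin N → ℝ := fun t i => X t ((i : ℕ) + 1) with hx
    set y : ℝ → Fin N → ℝ := fun t i => Y t ((i : ℕ) + 1) with hy
    have hXe : ∀ t (m : ℕ), m ≤ N + 1 → X t m = shellExt N (x t) m := by
      intro t m hm
      by_cases h : 1 ≤ m ∧ m ≤ N
      · rw [shellExt, dif_pos h]
        show X t m = X t (m - 1 + 1)
        congr 1
        omega
      · rw [shellExt, dif_neg h]
        have : m = 0 ∨ m = N + 1 := by omega
        rcases this with h0 | h0 <;> rw [h0]
        · exact hX.1 t
        · exact hX.2.1 t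
    have hYe : ∀ t (m : ℕ), m ≤ N + 1 → Y t m = shellExt N (y t) m := by
      intro t m hm
      by_cases h : 1 ≤ m ∧ m ≤ N
      · rw [shellExt, dif_pos h]
        show Y t m = Y t (m - 1 + 1)
        congr 1
        omega
      · rw [shellExt, dif_neg h]
        have : m = 0 ∨ m = N + 1 := by omega
        rcases this with h0 | h0 <;> rw [h0]
        · exact hY.1 t
        · exact hY.2.1 t
    have hxd : ∀ t ∈ Icc (0:ℝ) T, HasDerivWithinAt x (shellF lam N (x t)) (Icc 0 T) t := by
      intro t ht
      rw [hasDerivWithinAt_pi]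
      intro i
      have h := hX.2.2 ((i : ℕ) + 1) (Nat.le_add_left 1 _) i.isLt t ht
      simp only [Nat.add_sub_cancel] at h
      rw [hXe t (i : ℕ) (by omega), hXe t ((i : ℕ) + 1) (by omega),
        hXe t ((i : ℕ) + 1 + 1) (by omega)] at h
      exact h
    have hyd : ∀ t ∈ Icc (0:ℝ) T, HasDerivWithinAt y (shellF lam N (y t)) (Icc 0 T) t := by
      intro t ht
      rw [hasDerivWithinAt_pi]
      intro i
      have h := hY.2.2 ((i : ℕ) + 1) (Nat.le_add_left 1 _) i.isLt t ht
      simp only [Nat.add_sub_cancel] at h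
      rw [hYe t (i : ℕ) (by omega), hYe t ((i : ℕ) + 1) (by omega),
        hYe t ((i : ℕ) + 1 + 1) (by omega)] at h
      exact h
    have hxc : ContinuousOn x (Icc 0 T) := fun t ht => (hxd t ht).continuousWithinAt
    have hyc : ContinuousOn y (Icc 0 T) := fun t ht => (hyd t ht).continuousWithinAt
    obtain ⟨M1, hM1⟩ := (isCompact_Icc.image_of_continuousOn hxc).isBounded.subset_closedBall 0
    obtain ⟨M2, hM2⟩ := (isCompact_Icc.image_of_continuousOn hyc).isBounded.subset_closedBall 0
    set M : ℝ := max (max M1 M2) 0 with hM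
    set r : ℝ := N * M ^ 2 + 1 with hr
    have hr0 : 0 < r := by positivity
    obtain ⟨g, ⟨K, hK⟩, -, hagree, -⟩ := shell_truncated lam N r hr0
    have hball : ∀ v : Fin N → ℝ, ‖v‖ ≤ M → (∑ i, (v i) ^ 2) ≤ r := by
      intro v hv
      have h5 : ∀ i : Fin N, (v i) ^ 2 ≤ M ^ 2 := by
        intro i
        have h6 : ‖v i‖ ≤ M := (norm_le_pi_norm v i).trans hv
        calc (v i) ^ 2 = |v i| ^ 2 := (sq_abs _).symm
          _ ≤ M ^ 2 := pow_le_pow_left₀ (abs_nonneg _) (by rwa [← Real.norm_eq_abs]) 2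
      calc ∑ i, (v i) ^ 2 ≤ ∑ _i : Fin N, M ^ 2 := Finset.sum_le_sum fun i _ => h5 i
        _ = N * M ^ 2 := by simp [Finset.sum_const, Finset.card_univ, nsmul_eq_mul]
        _ ≤ r := by rw [hr]; linarith
    have hgx : ∀ t ∈ Icc (0:ℝ) T, g (x t) = shellF lam N (x t) := by
      intro t ht
      apply hagree
      apply hball
      have := hM1 (mem_image_of_mem x ht)
      rw [mem_closedBall, dist_zero_right] at this
      exact this.trans (le_max_of_le_left (le_max_left _ _))
    have hgy : ∀ t ∈ Icc (0:ℝ) T, g (y t) = shellF lam N (y t) := by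
      intro t ht
      apply hagree
      apply hball
      have := hM2 (mem_image_of_mem y ht)
      rw [mem_closedBall, dist_zero_right] at this
      exact this.trans (le_max_of_le_left (le_max_right _ _))
    have hxd' : ∀ t ∈ Ico (0:ℝ) T, HasDerivWithinAt x (g (x t)) (Ici t) t := by
      intro t ht
      rw [hgx t (Ico_subset_Icc_self ht)]
      exact (hxd t (Ico_subset_Icc_self ht)).mono_of_mem_nhdsWithin (Icc_mem_nhdsGE_of_mem ht)
    have hyd' : ∀ t ∈ Ico (0:ℝ) T, HasDerivWithinAt y (g (y t)) (Ici t) t := by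
      intro t ht
      rw [hgy t (Ico_subset_Icc_self ht)]
      exact (hyd t (Ico_subset_Icc_self ht)).mono_of_mem_nhdsWithin (Icc_mem_nhdsGE_of_mem ht)
    have hinit : x 0 = y 0 := by
      funext i
      show X 0 ((i : ℕ) + 1) = Y 0 ((i : ℕ) + 1)
      rw [hX0 _ (Nat.le_add_left 1 _) i.isLt, hY0 _ (Nat.le_add_left 1 _) i.isLt]
    have key := ODE_solution_unique (v := fun _ => g) (fun _ => hK) hxc hxd' hyc hyd' hinit
    intro n h1 h2 t ht
    have hfin : n - 1 < N := by omega
    have ex : X t n = x t ⟨n - 1, hfin⟩ := by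
      show X t n = X t (n - 1 + 1)
      congr 1
      omega
    have ey : Y t n = y t ⟨n - 1, hfin⟩ := by
      show Y t n = Y t (n - 1 + 1)
      congr 1
      omega
    rw [ex, ey, key ht]
end

section
/- Let b : ℝ^N → ℝ^N be the shell vector field. Then for every x ∈ ℝ^N: (i) ∑_{n=1}^N x_n b_n(x) = 0; (ii) ∑_{n=1}^N (∂b_n/∂x_n)(x) = 0; consequently, for every r > 0, with f(x) = exp(−‖x‖²/r²) one has div(b f)(x) = ∑_{n=1}^N ∂/∂x_n ( b_n(x) f(x) ) = 0. -/
/-- The shell vector field `b : ℝ^N → ℝ^N`,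
`b_n(x) = k_n x_{n−1}² − k_{n+1} x_n x_{n+1} − k_n x_{n+1}² + k_{n−1} x_{n−1} x_n`
for `1 ≤ n ≤ N`.  (The convention `x_0 = x_{N+1} = 0` is automatic here, since every
occurrence of `x 0` carries the coefficient `k_0 = k_1 = 0` and every occurrence of
`x (N+1)` carries the coefficient `k_N = k_{N+1} = 0`.) -/
noncomputable def shellB (lam : ℝ) (N : ℕ) (n : ℕ) (x : ℕ → ℝ) : ℝ :=
  shellK lam N n * (x (n - 1)) ^ 2
    - shellK lam N (n + 1) * x n * x (n + 1)
    - shellK lam N n * (x (n + 1)) ^ 2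
    + shellK lam N (n - 1) * x (n - 1) * x n

/-- The Gaussian density `f(x) = exp(−‖x‖²/r²)`, `‖x‖² = ∑_{n=1}^N x_n²`. -/
noncomputable def gaussF (r : ℝ) (N : ℕ) (x : ℕ → ℝ) : ℝ :=
  Real.exp (-(∑ n ∈ Finset.Icc 1 N, (x n) ^ 2) / r ^ 2)

namespace ShellAux

/-- telescoping potential for `∑ x_n b_n`. -/
noncomputable def G (lam : ℝ) (N : ℕ) (x : ℕ → ℝ) (i : ℕ) : ℝ :=
  shellK lam N (i+1) * x i ^ 2 * x (i+1) + shellK lam N i * x i * x (i+1) ^ 2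

/-- telescoping potential for `∑ ∂b_n/∂x_n`. -/
noncomputable def H (lam : ℝ) (N : ℕ) (x : ℕ → ℝ) (i : ℕ) : ℝ :=
  -(shellK lam N (i+1) * x (i+1)) - shellK lam N i * x i

lemma K_zero (lam : ℝ) (N : ℕ) : shellK lam N 0 = 0 := by simp [shellK]

lemma K_one (lam : ℝ) (N : ℕ) : shellK lam N 1 = 0 := by simp [shellK]

lemma K_N (lam : ℝ) (N : ℕ) : shellK lam N N = 0 := by simp [shellK]

lemma K_N1 (lam : ℝ) (N : ℕ) : shellK lam N (N+1) = 0 := by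
  unfold shellK; rw [if_neg]; omega

lemma reidx (N : ℕ) (f : ℕ → ℝ) :
    ∑ n ∈ Finset.Icc 1 N, f n = ∑ i ∈ Finset.range N, f (i+1) := by
  rw [← Finset.Ico_add_one_right_eq_Icc, Finset.sum_Ico_eq_sum_range]
  exact Finset.sum_congr rfl fun i _ => by rw [add_comm]

lemma termG (lam : ℝ) (N : ℕ) (x : ℕ → ℝ) (i : ℕ) :
    x (i+1) * shellB lam N (i+1) x = G lam N x i - G lam N x (i+1) := by
  simp only [shellB, G, Nat.add_sub_cancel]; ring

lemma sumA (lam : ℝ) (N : ℕ) (x : ℕ → ℝ) :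
    ∑ i ∈ Finset.range N, x (i+1) * shellB lam N (i+1) x = 0 := by
  rw [Finset.sum_congr rfl fun i _ => termG lam N x i,
    Finset.sum_range_sub' (G lam N x) N]
  simp [G, K_zero, K_one, K_N, K_N1]

lemma sumB (lam : ℝ) (N : ℕ) (x : ℕ → ℝ) :
    ∑ i ∈ Finset.range N,
      (shellK lam N i * x i - shellK lam N (i+1+1) * x (i+1+1)) = 0 := by
  have h : ∀ i, shellK lam N i * x i - shellK lam N (i+1+1) * x (i+1+1)
      = H lam N x (i+1) - H lam N x i := by
    intro i; simp only [H]; ring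
  rw [Finset.sum_congr rfl fun i _ => h i, Finset.sum_range_sub (H lam N x) N]
  simp [H, K_zero, K_one, K_N, K_N1]

lemma derivB (lam : ℝ) (N : ℕ) (x : ℕ → ℝ) (i : ℕ) :
    deriv (fun y => shellB lam N (i+1) (Function.update x (i+1) y)) (x (i+1)) =
      shellK lam N i * x i - shellK lam N (i+1+1) * x (i+1+1) := by
  have h1 : ∀ y : ℝ, Function.update x (i+1) y (i+1-1) = x i := fun y => by
    rw [show i+1-1 = i from rfl]; exact Function.update_of_ne (by omega) _ _
  have h2 : ∀ y : ℝ, Function.update x (i+1) y (i+1) = y :=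
    fun y => Function.update_self _ _ _
  have h3 : ∀ y : ℝ, Function.update x (i+1) y (i+1+1) = x (i+1+1) :=
    fun y => Function.update_of_ne (by omega) _ _
  have hfun : (fun y => shellB lam N (i+1) (Function.update x (i+1) y))
      = fun y => (shellK lam N (i+1) * x i ^ 2 - shellK lam N (i+1) * x (i+1+1) ^ 2)
        + (shellK lam N i * x i - shellK lam N (i+1+1) * x (i+1+1)) * y := by
    funext y
    simp only [shellB, Nat.add_sub_cancel, h1 y, h2 y, h3 y,
      Function.update_of_ne (show i ≠ i+1 by omega)]
    ring
  rw [hfun]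
  have hd := ((hasDerivAt_id (x (i+1))).const_mul
      (shellK lam N i * x i - shellK lam N (i+1+1) * x (i+1+1))).const_add
      (shellK lam N (i+1) * x i ^ 2 - shellK lam N (i+1) * x (i+1+1) ^ 2)
  simpa using hd.deriv

lemma derivBF (lam : ℝ) (N : ℕ) (x : ℕ → ℝ) (r : ℝ) (hr : 0 < r) (i : ℕ)
    (hi : i + 1 ∈ Finset.Icc 1 N) :
    deriv (fun y => shellB lam N (i+1) (Function.update x (i+1) y)
        * gaussF r N (Function.update x (i+1) y)) (x (i+1)) =
      (shellK lam N i * x i - shellK lam N (i+1+1) * x (i+1+1)) * gaussF r N x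
        + shellB lam N (i+1) x * (gaussF r N x * (-(2 * x (i+1)) / r ^ 2)) := by
  set a : ℝ := shellK lam N (i+1) * x i ^ 2 - shellK lam N (i+1) * x (i+1+1) ^ 2 with ha
  set bb : ℝ := shellK lam N i * x i - shellK lam N (i+1+1) * x (i+1+1) with hbb
  set S : ℝ := ∑ m ∈ Finset.Icc 1 N \ {i+1}, x m ^ 2 with hS
  have hupd : ∀ y : ℝ,
      ∑ m ∈ Finset.Icc 1 N, (Function.update x (i+1) y m) ^ 2 = y ^ 2 + S := by
    intro y
    have hc : ∀ m ∈ Finset.Icc 1 N, (Function.update x (i+1) y m) ^ 2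
        = Function.update (fun m => x m ^ 2) (i+1) (y ^ 2) m := by
      intro m _
      rcases eq_or_ne m (i+1) with h | h
      · subst h; simp
      · simp [Function.update_of_ne h]
    rw [Finset.sum_congr rfl hc, Finset.sum_update_of_mem hi]
  have hBfun : ∀ y : ℝ,
      shellB lam N (i+1) (Function.update x (i+1) y) = a + bb * y := by
    intro y
    have h1 : Function.update x (i+1) y (i+1-1) = x i := by
      rw [show i+1-1 = i from rfl]; exact Function.update_of_ne (by omega) _ _
    have h2 : Function.update x (i+1) y (i+1) = y := Function.update_self _ _ _
    have h3 : Function.update x (i+1) y (i+1+1) = x (i+1+1) :=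
      Function.update_of_ne (by omega) _ _
    simp only [shellB, Nat.add_sub_cancel, h1, h2, h3, ha, hbb,
      Function.update_of_ne (show i ≠ i+1 by omega)]
    ring
  have hfun : (fun y => shellB lam N (i+1) (Function.update x (i+1) y)
      * gaussF r N (Function.update x (i+1) y))
      = fun y => (a + bb * y) * Real.exp (-(y ^ 2 + S) / r ^ 2) := by
    funext y
    rw [hBfun y]
    unfold gaussF
    rw [hupd y]
  rw [hfun]
  have hd1 : HasDerivAt (fun y : ℝ => a + bb * y) bb (x (i+1)) := by
    simpa using ((hasDerivAt_id (x (i+1))).const_mul bb).const_add a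
  have hd2 : HasDerivAt (fun y : ℝ => Real.exp (-(y ^ 2 + S) / r ^ 2))
      (Real.exp (-((x (i+1)) ^ 2 + S) / r ^ 2) * (-(2 * x (i+1)) / r ^ 2)) (x (i+1)) := by
    have h0 : HasDerivAt (fun y : ℝ => -(y ^ 2 + S) / r ^ 2)
        (-(2 * x (i+1)) / r ^ 2) (x (i+1)) := by
      have := (((hasDerivAt_pow 2 (x (i+1)))).add_const S).neg.div_const (r ^ 2)
      simpa using this
    simpa using h0.exp
  have hd : HasDerivAt (fun y => (a + bb * y) * Real.exp (-(y ^ 2 + S) / r ^ 2)) _ (x (i+1)) :=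
    hd1.mul hd2
  rw [hd.deriv]
  have hgx : gaussF r N x = Real.exp (-((x (i+1)) ^ 2 + S) / r ^ 2) := by
    unfold gaussF
    rw [Finset.sum_eq_add_sum_sdiff_singleton_of_mem hi (fun m => x m ^ 2)]
  have hbx : shellB lam N (i+1) x = a + bb * x (i+1) := by
    have h := hBfun (x (i+1))
    rwa [Function.update_eq_self] at h
  rw [hgx, hbx]

end ShellAux

open ShellAux in
/-- for the shell vector field `b` one has, for every `x ∈ ℝ^N`:
(i) `∑_{n=1}^N x_n b_n(x) = 0`; (ii) `∑_{n=1}^N ∂b_n/∂x_n (x) = 0`; and consequently,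
for every `r > 0`, with `f(x) = exp(−‖x‖²/r²)`, `div (b f)(x) = 0`. -/
theorem shell_divergence_free (lam : ℝ) (hlam : 1 < lam) (N : ℕ) (hN : 1 ≤ N)
    (x : ℕ → ℝ) :
    (∑ n ∈ Finset.Icc 1 N, x n * shellB lam N n x = 0) ∧
    (∑ n ∈ Finset.Icc 1 N,
      deriv (fun y : ℝ => shellB lam N n (Function.update x n y)) (x n) = 0) ∧
    (∀ r : ℝ, 0 < r →
      ∑ n ∈ Finset.Icc 1 N,
        deriv (fun y : ℝ =>
          shellB lam N n (Function.update x n y) * gaussF r N (Function.update x n y))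
          (x n) = 0) := by
  refine ⟨?_, ?_, ?_⟩
  · rw [reidx N (fun n => x n * shellB lam N n x)]
    exact sumA lam N x
  · rw [reidx N (fun n => deriv (fun y : ℝ => shellB lam N n (Function.update x n y)) (x n))]
    calc ∑ i ∈ Finset.range N,
        deriv (fun y : ℝ => shellB lam N (i+1) (Function.update x (i+1) y)) (x (i+1))
        = ∑ i ∈ Finset.range N,
            (shellK lam N i * x i - shellK lam N (i+1+1) * x (i+1+1)) :=
          Finset.sum_congr rfl fun i _ => derivB lam N x i
      _ = 0 := sumB lam N x
  · intro r hr
    rw [reidx N (fun n => deriv (fun y : ℝ =>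
      shellB lam N n (Function.update x n y) * gaussF r N (Function.update x n y)) (x n))]
    have hmem : ∀ i ∈ Finset.range N, i + 1 ∈ Finset.Icc 1 N := by
      intro i hi
      rw [Finset.mem_range] at hi
      rw [Finset.mem_Icc]
      omega
    calc ∑ i ∈ Finset.range N,
        deriv (fun y : ℝ => shellB lam N (i+1) (Function.update x (i+1) y)
          * gaussF r N (Function.update x (i+1) y)) (x (i+1))
        = ∑ i ∈ Finset.range N,
            ((shellK lam N i * x i - shellK lam N (i+1+1) * x (i+1+1)) * gaussF r N x
              + (x (i+1) * shellB lam N (i+1) x) * (-(2) / r ^ 2 * gaussF r N x)) := by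
          refine Finset.sum_congr rfl fun i hi => ?_
          rw [derivBF lam N x r hr i (hmem i hi)]
          ring
      _ = (∑ i ∈ Finset.range N,
            (shellK lam N i * x i - shellK lam N (i+1+1) * x (i+1+1))) * gaussF r N x
          + (∑ i ∈ Finset.range N, x (i+1) * shellB lam N (i+1) x)
            * (-(2) / r ^ 2 * gaussF r N x) := by
          rw [Finset.sum_add_distrib, Finset.sum_mul, Finset.sum_mul]
      _ = 0 := by simp [sumA lam N x, sumB lam N x]
end
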